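/- Let ρ be a finite positive Borel measure on [0,∞), a ∈ ℝ, and u(z) = a + ∫_{[0,∞)} (1+zs)/(z−s) dρ(s) for z in the upper half-plane. Let t > 1. Then: (i) for every r > 0 the set {θ ∈ (0,π) : −Im u(re^{iθ})/θ < 1/(t−1)} is nonempty, and its infimum A_t(r) satisfies 0 ≤ A_t(r) < π; (ii) V_t^+ := {r > 0 : g(r) > 1/(t−1)} equals {r > 0 : A_t(r) > 0}, where g(r) = ∫_{[0,∞)} r(s²+1)/(r−s)² dρ(s) ∈ [0,∞]; (iii) for every r ∈ V_t^+ one has Im u(r·e^{iA_t(r)}) = −A_t(r)/(t−1). -/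

import Mathlib

open MeasureTheory Filter ENNReal

/-- u(z) = a + ∫ (1+zs)/(z−s) dρ(s). -/
noncomputable def ufun (ρ : Measure ℝ) (a : ℝ) (z : ℂ) : ℂ :=
  (a : ℂ) + ∫ s : ℝ, (1 + z * (s : ℂ)) / (z - (s : ℂ)) ∂ρ

/-- A_t(r) = inf{θ ∈ (0,π) : −Im u(re^{iθ})/θ < 1/(t−1)}. -/
noncomputable def At (ρ : Measure ℝ) (a t r : ℝ) : ℝ :=
  sInf {θ : ℝ | θ ∈ Set.Ioo 0 Real.pi ∧
    -(ufun ρ a ((r : ℂ) * Complex.exp ((θ : ℂ) * Complex.I))).im / θ < 1 / (t - 1)}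

/-- g(r) = ∫ r(s²+1)/(r−s)² dρ(s), with values in [0,∞]. -/
noncomputable def gfun (ρ : Measure ℝ) (r : ℝ) : ℝ≥0∞ :=
  ∫⁻ s : ℝ, ENNReal.ofReal (r * (s ^ 2 + 1)) / ENNReal.ofReal ((r - s) ^ 2) ∂ρ


section Aux
open Real Set


noncomputable def zpt (r θ : ℝ) : ℂ := (r : ℂ) * Complex.exp ((θ : ℂ) * Complex.I)

lemma zpt_re (r θ : ℝ) : (zpt r θ).re = r * Real.cos θ := by
  simp [zpt, Complex.exp_mul_I, Complex.mul_re, ← Complex.ofReal_cos, ← Complex.ofReal_sin,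
    Complex.add_re, Complex.mul_im]

lemma zpt_im (r θ : ℝ) : (zpt r θ).im = r * Real.sin θ := by
  simp [zpt, Complex.exp_mul_I, Complex.mul_re, ← Complex.ofReal_cos, ← Complex.ofReal_sin,
    Complex.add_im, Complex.mul_im]

lemma zpt_ne (r θ : ℝ) (h : r * Real.sin θ ≠ 0) (s : ℝ) : zpt r θ - (s:ℂ) ≠ 0 := by
  intro hc
  apply h
  have := congrArg Complex.im hc
  simpa [zpt_im] using this

lemma im_integrand (z : ℂ) (s : ℝ) (h : z - (s:ℂ) ≠ 0) :
    ((1 + z * (s:ℂ)) / (z - (s:ℂ))).im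
      = -((1 + s^2) * z.im) / Complex.normSq (z - (s:ℂ)) := by
  have hn : Complex.normSq (z - (s:ℂ)) ≠ 0 := by
    simpa [Complex.normSq_eq_zero] using h
  rw [Complex.div_im]
  have h1 : (1 + z * (s:ℂ)).im = z.im * s := by simp
  have h2 : (1 + z * (s:ℂ)).re = 1 + z.re * s := by simp
  have h3 : (z - (s:ℂ)).re = z.re - s := by simp
  have h4 : (z - (s:ℂ)).im = z.im := by simp
  have h5 : Complex.normSq (z - (s:ℂ)) = (z.re - s)^2 + z.im^2 := by
    rw [Complex.normSq_apply, h3, h4]; ring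
  rw [h1, h2, h3, h4, h5]
  have h6 : (z.re - s)^2 + z.im^2 ≠ 0 := by rw [← h5]; exact hn
  field_simp
  ring

lemma integrand_eq (z : ℂ) (s : ℝ) (h : z - (s:ℂ) ≠ 0) :
    (1 + z * (s:ℂ)) / (z - (s:ℂ)) = (1 + z^2) / (z - (s:ℂ)) - z := by
  field_simp
  ring

lemma integrable_integrand (ρ : Measure ℝ) [IsFiniteMeasure ρ] (z : ℂ) (hz : 0 < z.im) :
    Integrable (fun s : ℝ => (1 + z * (s:ℂ)) / (z - (s:ℂ))) ρ := by
  have hne : ∀ s : ℝ, z - (s:ℂ) ≠ 0 := by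
    intro s hc
    have := congrArg Complex.im hc
    simp at this
    exact absurd this (ne_of_gt hz)
  have hcont : Continuous (fun s : ℝ => (1 + z^2) / (z - (s:ℂ))) := by
    apply continuous_const.div
    · exact continuous_const.sub (Complex.continuous_ofReal)
    · exact hne
  have h1 : Integrable (fun s : ℝ => (1 + z^2) / (z - (s:ℂ))) ρ := by
    apply Integrable.mono' (g := fun _ : ℝ => ‖1 + z^2‖ / z.im)
      (integrable_const _) hcont.aestronglyMeasurable
    filter_upwards with s
    have h1 : z.im ≤ ‖z - (s:ℂ)‖ := by
      calc z.im = |(z - (s:ℂ)).im| := by simp [abs_of_pos hz]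
      _ ≤ ‖z - (s:ℂ)‖ := Complex.abs_im_le_norm _
    rw [norm_div]
    exact div_le_div_of_nonneg_left (norm_nonneg _) hz h1
  have := (h1.sub (integrable_const z))
  apply this.congr
  filter_upwards with s
  exact (integrand_eq z s (hne s)).symm

noncomputable def Pf (r θ s : ℝ) : ℝ :=
  (1 + s^2) * (r * Real.sin θ) / ((r * Real.cos θ - s)^2 + (r * Real.sin θ)^2)

lemma Pf_denom_eq (r θ s : ℝ) :
    (r * Real.cos θ - s)^2 + (r * Real.sin θ)^2 = r^2 - 2*r*s*Real.cos θ + s^2 := by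
  have := Real.sin_sq_add_cos_sq θ
  nlinarith [this]

lemma Pf_denom_pos (r θ s : ℝ) (h : r * Real.sin θ ≠ 0) :
    0 < (r * Real.cos θ - s)^2 + (r * Real.sin θ)^2 := by
  positivity

lemma Pf_nonneg (r θ s : ℝ) (hr : 0 < r) (hθ : θ ∈ Set.Ioo 0 π) : 0 ≤ Pf r θ s := by
  have := Real.sin_pos_of_pos_of_lt_pi hθ.1 hθ.2
  unfold Pf; positivity

-- denominator lower bounds
lemma denom_ge_sub_sq (r θ s : ℝ) (hs : 0 ≤ s) (hr : 0 ≤ r) :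
    (r - s)^2 ≤ (r * Real.cos θ - s)^2 + (r * Real.sin θ)^2 := by
  rw [Pf_denom_eq]
  have h1 : Real.cos θ ≤ 1 := Real.cos_le_one θ
  nlinarith [mul_nonneg (mul_nonneg hr hs) (sub_nonneg.mpr h1)]

lemma denom_ge_mul (r θ s : ℝ) :
    (1 - |Real.cos θ|) * (r^2 + s^2) ≤ (r * Real.cos θ - s)^2 + (r * Real.sin θ)^2 := by
  rw [Pf_denom_eq]
  have h2 : 2*r*s*Real.cos θ ≤ |Real.cos θ| * (r^2 + s^2) := by
    calc 2*r*s*Real.cos θ ≤ |2*r*s*Real.cos θ| := le_abs_self _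
      _ = 2 * (abs r * abs s) * |Real.cos θ| := by
          rw [abs_mul, abs_mul, abs_mul, abs_two]; ring
      _ ≤ |Real.cos θ| * (r^2 + s^2) := by
          nlinarith [sq_abs r, sq_abs s, sq_nonneg (abs r - abs s), abs_nonneg (Real.cos θ)]
  nlinarith

lemma denom_ge_add_sq (r θ s : ℝ) (hs : 0 ≤ s) (hr : 0 ≤ r) (hc : Real.cos θ ≤ 0) :
    r^2 + s^2 ≤ (r * Real.cos θ - s)^2 + (r * Real.sin θ)^2 := by
  rw [Pf_denom_eq]
  nlinarith [mul_nonneg (mul_nonneg hr hs) (neg_nonneg.mpr hc)]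

lemma one_add_sq_le (r s : ℝ) (hr : 0 < r) : 1 + s^2 ≤ (1 + r⁻¹^2) * (r^2 + s^2) := by
  have h : r⁻¹^2 * r^2 = 1 := by field_simp
  nlinarith [sq_nonneg s, sq_nonneg r, sq_nonneg (r⁻¹*s), mul_nonneg (sq_nonneg r⁻¹) (sq_nonneg s)]


lemma normSq_zpt_sub (r θ s : ℝ) :
    Complex.normSq (zpt r θ - (s:ℂ)) = (r * Real.cos θ - s)^2 + (r * Real.sin θ)^2 := by
  rw [Complex.normSq_apply]
  simp [zpt_re, zpt_im, Complex.sub_re, Complex.sub_im]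
  ring

lemma im_u (ρ : Measure ℝ) [IsFiniteMeasure ρ] (a : ℝ) (z : ℂ) (hz : 0 < z.im) :
    (ufun ρ a z).im = ∫ s : ℝ, -((1 + s^2) * z.im) / Complex.normSq (z - (s:ℂ)) ∂ρ := by
  have hne : ∀ s : ℝ, z - (s:ℂ) ≠ 0 := by
    intro s hc
    have := congrArg Complex.im hc
    simp at this
    exact absurd this (ne_of_gt hz)
  have hint := integrable_integrand ρ z hz
  have : (ufun ρ a z).im = ∫ s : ℝ, ((1 + z * (s:ℂ)) / (z - (s:ℂ))).im ∂ρ := by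
    rw [ufun, Complex.add_im, Complex.ofReal_im, zero_add]
    exact (integral_im hint).symm
  rw [this]
  congr 1
  funext s
  exact im_integrand z s (hne s)

lemma zpt_im_pos (r θ : ℝ) (hr : 0 < r) (hθ : θ ∈ Set.Ioo 0 π) : 0 < (zpt r θ).im := by
  rw [zpt_im]
  exact mul_pos hr (Real.sin_pos_of_pos_of_lt_pi hθ.1 hθ.2)

lemma neg_im_u (ρ : Measure ℝ) [IsFiniteMeasure ρ] (a r θ : ℝ) (hr : 0 < r)
    (hθ : θ ∈ Set.Ioo 0 π) :
    -(ufun ρ a (zpt r θ)).im = ∫ s : ℝ, Pf r θ s ∂ρ := by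
  rw [im_u ρ a _ (zpt_im_pos r θ hr hθ), ← integral_neg]
  congr 1
  funext s
  rw [normSq_zpt_sub, zpt_im, Pf]
  ring

lemma integrable_Pf (ρ : Measure ℝ) [IsFiniteMeasure ρ] (r θ : ℝ) (hr : 0 < r)
    (hθ : θ ∈ Set.Ioo 0 π) : Integrable (fun s => Pf r θ s) ρ := by
  have h := ((integrable_integrand ρ (zpt r θ) (zpt_im_pos r θ hr hθ)).im).neg
  apply h.congr
  filter_upwards with s
  have hne : zpt r θ - (s:ℂ) ≠ 0 := by
    intro hc
    have := congrArg Complex.im hc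
    simp [zpt_im] at this
    rcases this with h'|h'
    · exact absurd h' (ne_of_gt hr)
    · exact absurd h' (ne_of_gt (Real.sin_pos_of_pos_of_lt_pi hθ.1 hθ.2))
  have h2 := im_integrand (zpt r θ) s hne
  simp only [Pi.neg_apply, RCLike.im_to_complex]
  rw [h2, normSq_zpt_sub, zpt_im, Pf]
  ring

lemma ae_nonneg (ρ : Measure ℝ) (hρ : ρ (Set.Iio 0) = 0) : ∀ᵐ s ∂ρ, (0:ℝ) ≤ s := by
  rw [ae_iff]
  convert hρ using 2
  ext s
  simp [Set.mem_Iio, not_le]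

/-- the ENNReal integrand of gfun -/
noncomputable def Gf (r s : ℝ) : ℝ≥0∞ :=
  ENNReal.ofReal (r * (s ^ 2 + 1)) / ENNReal.ofReal ((r - s) ^ 2)

lemma Pf_div_eq (r θ s : ℝ) (hθ : θ ≠ 0)
    (hD : (r * Real.cos θ - s)^2 + (r * Real.sin θ)^2 ≠ 0) :
    Pf r θ s / θ = (Real.sin θ / θ) *
      (r * (s^2 + 1) / ((r * Real.cos θ - s)^2 + (r * Real.sin θ)^2)) := by
  rw [Pf]
  field_simp
  ring

lemma pointwise_le (r θ s : ℝ) (hr : 0 < r) (hθ : θ ∈ Set.Ioo 0 π) (hs : 0 ≤ s) :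
    ENNReal.ofReal (Pf r θ s / θ) ≤ ENNReal.ofReal (Real.sin θ / θ) * Gf r s := by
  have hsin := Real.sin_pos_of_pos_of_lt_pi hθ.1 hθ.2
  have hD : 0 < (r * Real.cos θ - s)^2 + (r * Real.sin θ)^2 :=
    Pf_denom_pos r θ s (ne_of_gt (mul_pos hr hsin))
  rw [Pf_div_eq r θ s (ne_of_gt hθ.1) (ne_of_gt hD),
    ENNReal.ofReal_mul (div_nonneg hsin.le hθ.1.le), ENNReal.ofReal_div_of_pos hD]
  refine mul_le_mul_of_nonneg_left ?_ (by positivity)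
  rw [Gf]
  apply ENNReal.div_le_div le_rfl
  apply ENNReal.ofReal_le_ofReal
  exact denom_ge_sub_sq r θ s hs (le_of_lt hr)

lemma ofReal_H (ρ : Measure ℝ) [IsFiniteMeasure ρ] (r θ : ℝ) (hr : 0 < r)
    (hθ : θ ∈ Set.Ioo 0 π) :
    ENNReal.ofReal ((∫ s, Pf r θ s ∂ρ) / θ)
      = ∫⁻ s, ENNReal.ofReal (Pf r θ s / θ) ∂ρ := by
  rw [← integral_div]
  apply ofReal_integral_eq_lintegral_ofReal
  · exact (integrable_Pf ρ r θ hr hθ).div_const θ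
  · filter_upwards with s
    exact div_nonneg (Pf_nonneg r θ s hr hθ) (le_of_lt hθ.1)

lemma sin_div_tendsto : Tendsto (fun x : ℝ => Real.sin x / x) (nhdsWithin 0 {0}ᶜ) (nhds 1) := by
  have h := (hasDerivAt_iff_tendsto_slope).mp (Real.hasDerivAt_sin 0)
  rw [Real.cos_zero] at h
  apply h.congr'
  filter_upwards [self_mem_nhdsWithin] with x hx
  rw [slope_def_field]
  simp [Real.sin_zero]

lemma tendsto_Pf_zero (r s : ℝ) (hr : 0 < r) (hs : 0 ≤ s) (θv : ℕ → ℝ)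
    (hmem : ∀ n, θv n ∈ Set.Ioo 0 π) (hto : Tendsto θv atTop (nhds 0)) :
    Tendsto (fun n => ENNReal.ofReal
      ((1 + s^2) * (r * Real.sin (θv n)) / ((r * Real.cos (θv n) - s)^2 + (r * Real.sin (θv n))^2) / θv n))
      atTop (nhds (ENNReal.ofReal (r * (s ^ 2 + 1)) / ENNReal.ofReal ((r - s) ^ 2))) := by
  have hθpos : ∀ n, 0 < θv n := fun n => (hmem n).1
  have hsinpos : ∀ n, 0 < Real.sin (θv n) :=
    fun n => Real.sin_pos_of_pos_of_lt_pi (hmem n).1 (hmem n).2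
  have hθne : Tendsto θv atTop (nhdsWithin 0 {0}ᶜ) :=
    tendsto_nhdsWithin_of_tendsto_nhds_of_eventually_within _ hto
      (Eventually.of_forall fun n => ne_of_gt (hθpos n))
  have hsin : Tendsto (fun n => Real.sin (θv n) / θv n) atTop (nhds 1) :=
    sin_div_tendsto.comp hθne
  have hDpos : ∀ n, 0 < (r * Real.cos (θv n) - s)^2 + (r * Real.sin (θv n))^2 := by
    intro n
    have : r * Real.sin (θv n) ≠ 0 := ne_of_gt (mul_pos hr (hsinpos n))
    positivity
  have hD : Tendsto (fun n => (r * Real.cos (θv n) - s)^2 + (r * Real.sin (θv n))^2)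
      atTop (nhds ((r - s)^2)) := by
    have hc : Continuous (fun θ : ℝ => (r * Real.cos θ - s)^2 + (r * Real.sin θ)^2) := by
      continuity
    have := (hc.tendsto 0).comp hto
    simpa [Function.comp_def] using this
  have hEq : ∀ n, (1 + s^2) * (r * Real.sin (θv n)) /
      ((r * Real.cos (θv n) - s)^2 + (r * Real.sin (θv n))^2) / θv n
      = (Real.sin (θv n) / θv n) *
        ((r * (s^2 + 1)) / ((r * Real.cos (θv n) - s)^2 + (r * Real.sin (θv n))^2)) := by
    intro n
    have h1 := ne_of_gt (hDpos n)
    have h2 := ne_of_gt (hθpos n)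
    field_simp
    ring
  rcases eq_or_ne s r with hsr | hsr
  · -- s = r : tends to ⊤
    subst hsr
    have htop : Tendsto (fun n => (Real.sin (θv n) / θv n) *
        ((s * (s^2 + 1)) / ((s * Real.cos (θv n) - s)^2 + (s * Real.sin (θv n))^2)))
        atTop atTop := by
      apply Filter.Tendsto.pos_mul_atTop one_pos hsin
      have hDto : Tendsto (fun n => (s * Real.cos (θv n) - s)^2 + (s * Real.sin (θv n))^2)
          atTop (nhdsWithin 0 (Set.Ioi 0)) := by
        apply tendsto_nhdsWithin_of_tendsto_nhds_of_eventually_within _ (by simpa using hD)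
        exact Eventually.of_forall fun n => hDpos n
      have hinv := tendsto_inv_nhdsGT_zero.comp hDto
      exact Filter.Tendsto.const_mul_atTop (by positivity : (0:ℝ) < s * (s^2+1))
        (by exact hinv)
    have := ENNReal.tendsto_ofReal_atTop.comp htop
    have h2 : Tendsto (fun n => ENNReal.ofReal
        ((1 + s^2) * (s * Real.sin (θv n)) / ((s * Real.cos (θv n) - s)^2 + (s * Real.sin (θv n))^2) / θv n))
        atTop (nhds ⊤) := by
      apply this.congr
      intro n
      simp only [Function.comp_apply]
      rw [hEq n]
    convert h2 using 2
    rw [sub_self]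
    norm_num
    rw [ENNReal.div_zero]
    simp only [ne_eq, ENNReal.ofReal_eq_zero, not_le]
    positivity
  · -- s ≠ r : finite limit
    have hlim : Tendsto (fun n => (Real.sin (θv n) / θv n) *
        ((r * (s^2 + 1)) / ((r * Real.cos (θv n) - s)^2 + (r * Real.sin (θv n))^2)))
        atTop (nhds (1 * (r * (s^2+1) / (r-s)^2))) := by
      have hrs : r - s ≠ 0 := sub_ne_zero.mpr hsr.symm
      apply hsin.mul
      exact tendsto_const_nhds.div hD (pow_ne_zero 2 hrs)
    rw [one_mul] at hlim
    have hrs : r - s ≠ 0 := sub_ne_zero.mpr hsr.symm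
    have hq : (0:ℝ) < (r - s)^2 :=
      lt_of_le_of_ne (sq_nonneg _) (Ne.symm (pow_ne_zero 2 hrs))
    have := (ENNReal.continuous_ofReal.tendsto _).comp hlim
    rw [ENNReal.ofReal_div_of_pos hq] at this
    apply this.congr
    intro n
    simp only [Function.comp_apply]
    rw [hEq n]

lemma continuous_Pf (r θ : ℝ) (hD : r * Real.sin θ ≠ 0) :
    Continuous (fun s => Pf r θ s) := by
  unfold Pf
  apply Continuous.div (by continuity) (by continuity)
  intro s
  exact ne_of_gt (Pf_denom_pos r θ s hD)

lemma fatou_bound (ρ : Measure ℝ) [IsFiniteMeasure ρ] (hρ : ρ (Set.Iio 0) = 0)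
    (r : ℝ) (hr : 0 < r) (θv : ℕ → ℝ)
    (hmem : ∀ n, θv n ∈ Set.Ioo 0 π) (hto : Tendsto θv atTop (nhds 0)) :
    (∫⁻ s, Gf r s ∂ρ)
      ≤ liminf (fun n => ∫⁻ s, ENNReal.ofReal (Pf r (θv n) s / θv n) ∂ρ) atTop := by
  have hmeas : ∀ n, Measurable (fun s => ENNReal.ofReal (Pf r (θv n) s / θv n)) := by
    intro n
    have hsin := Real.sin_pos_of_pos_of_lt_pi (hmem n).1 (hmem n).2
    exact (((continuous_Pf r (θv n) (ne_of_gt (mul_pos hr hsin))).div_const _).measurable).ennreal_ofReal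
  refine le_trans ?_ (lintegral_liminf_le hmeas)
  apply lintegral_mono_ae
  filter_upwards [ae_nonneg ρ hρ] with s hs
  have ht := tendsto_Pf_zero r s hr hs θv hmem hto
  have heq : liminf (fun n => ENNReal.ofReal (Pf r (θv n) s / θv n)) atTop = Gf r s := by
    apply Filter.Tendsto.liminf_eq
    unfold Pf Gf
    exact ht
  rw [← heq]

lemma H_lt (ρ : Measure ℝ) [IsFiniteMeasure ρ] (hρ : ρ (Set.Iio 0) = 0)
    (r c : ℝ) (hr : 0 < r) (hc : 0 < c)
    (hg : (∫⁻ s, Gf r s ∂ρ) ≤ ENNReal.ofReal c) (θ : ℝ) (hθ : θ ∈ Set.Ioo 0 π) :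
    (∫ s, Pf r θ s ∂ρ) / θ < c := by
  have hkey : ENNReal.ofReal ((∫ s, Pf r θ s ∂ρ) / θ)
      ≤ ENNReal.ofReal (Real.sin θ / θ) * (∫⁻ s, Gf r s ∂ρ) := by
    rw [ofReal_H ρ r θ hr hθ, ← lintegral_const_mul' _ _ ENNReal.ofReal_ne_top]
    apply lintegral_mono_ae
    filter_upwards [ae_nonneg ρ hρ] with s hs
    exact pointwise_le r θ s hr hθ hs
  have hk1 : ENNReal.ofReal (Real.sin θ / θ) < 1 := by
    rw [ENNReal.ofReal_lt_one, div_lt_one hθ.1]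
    exact Real.sin_lt hθ.1
  rcases eq_or_ne (∫⁻ s, Gf r s ∂ρ) 0 with h0 | h0
  · rw [h0, mul_zero] at hkey
    have := ENNReal.ofReal_eq_zero.mp (le_antisymm (by simpa using hkey) (by positivity))
    linarith
  · have hlt : ENNReal.ofReal (Real.sin θ / θ) * (∫⁻ s, Gf r s ∂ρ)
        < ENNReal.ofReal c := by
      calc ENNReal.ofReal (Real.sin θ / θ) * (∫⁻ s, Gf r s ∂ρ)
          < 1 * (∫⁻ s, Gf r s ∂ρ) := by
            exact ENNReal.mul_lt_mul_left h0 (ne_top_of_le_ne_top ENNReal.ofReal_ne_top hg) hk1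
        _ = ∫⁻ s, Gf r s ∂ρ := one_mul _
        _ ≤ ENNReal.ofReal c := hg
    exact (ENNReal.ofReal_lt_ofReal_iff hc).mp (lt_of_le_of_lt hkey hlt)

lemma exists_theta (ρ : Measure ℝ) [IsFiniteMeasure ρ] (hρ : ρ (Set.Iio 0) = 0)
    (r c : ℝ) (hr : 0 < r) (hc : 0 < c) :
    ∃ θ ∈ Set.Ioo 0 π, (∫ s, Pf r θ s ∂ρ) / θ < c := by
  have hM : (0:ℝ) < 1 + r⁻¹^2 := by positivity
  set M : ℝ := 1 + r⁻¹^2 with hMdef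
  set K : ℝ := Real.sin 0
  haveI : (nhdsWithin π (Set.Iio π)).NeBot := nhdsLT_neBot π
  have hπ2 : π / 2 < π := by linarith [Real.pi_pos]
  have ev1 : ∀ᶠ θ in nhdsWithin π (Set.Iio π), π/2 < θ :=
    eventually_nhdsWithin_of_eventually_nhds (eventually_gt_nhds hπ2)
  have ev2 : ∀ᶠ θ in nhdsWithin π (Set.Iio π), θ < π := eventually_mem_nhdsWithin
  have ev3 : ∀ᶠ θ in nhdsWithin π (Set.Iio π),
      Real.sin θ * (r * M * (ρ Set.univ).toReal) < c := by
    have h1 : Tendsto (fun θ : ℝ => Real.sin θ * (r * M * (ρ Set.univ).toReal))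
        (nhdsWithin π (Set.Iio π)) (nhds (Real.sin π * (r * M * (ρ Set.univ).toReal))) :=
      ((Real.continuous_sin.tendsto π).mono_left nhdsWithin_le_nhds).mul_const _
    rw [Real.sin_pi, zero_mul] at h1
    exact h1.eventually_lt_const hc
  obtain ⟨θ, h1, h2, h3⟩ := (ev1.and (ev2.and ev3)).exists
  have hθ : θ ∈ Set.Ioo 0 π := ⟨by linarith [Real.pi_pos], h2⟩
  have hsin := Real.sin_pos_of_pos_of_lt_pi hθ.1 hθ.2
  have hcos : Real.cos θ ≤ 0 :=
    Real.cos_nonpos_of_pi_div_two_le_of_le h1.le (by linarith [Real.pi_pos])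
  refine ⟨θ, hθ, ?_⟩
  have hbd : ∀ᵐ s ∂ρ, Pf r θ s ≤ Real.sin θ * (r * M) := by
    filter_upwards [ae_nonneg ρ hρ] with s hs
    have hD : 0 < (r * Real.cos θ - s)^2 + (r * Real.sin θ)^2 :=
      Pf_denom_pos r θ s (ne_of_gt (mul_pos hr hsin))
    rw [Pf, div_le_iff₀ hD]
    have e1 : 1 + s^2 ≤ M * (r^2 + s^2) := one_add_sq_le r s hr
    have e2 : r^2 + s^2 ≤ (r * Real.cos θ - s)^2 + (r * Real.sin θ)^2 :=
      denom_ge_add_sq r θ s hs hr.le hcos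
    calc (1 + s^2) * (r * Real.sin θ) ≤ (M * (r^2 + s^2)) * (r * Real.sin θ) := by
          apply mul_le_mul_of_nonneg_right e1 (by positivity)
      _ ≤ (M * ((r * Real.cos θ - s)^2 + (r * Real.sin θ)^2)) * (r * Real.sin θ) := by
          apply mul_le_mul_of_nonneg_right _ (by positivity)
          exact mul_le_mul_of_nonneg_left e2 hM.le
      _ = Real.sin θ * (r * M) * ((r * Real.cos θ - s)^2 + (r * Real.sin θ)^2) := by ring
  have hint : ∫ s, Pf r θ s ∂ρ ≤ Real.sin θ * (r * M) * (ρ Set.univ).toReal := by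
    calc ∫ s, Pf r θ s ∂ρ ≤ ∫ _, Real.sin θ * (r * M) ∂ρ :=
          integral_mono_ae (integrable_Pf ρ r θ hr hθ) (integrable_const _) hbd
      _ = (ρ Set.univ).toReal • (Real.sin θ * (r * M)) := integral_const _
      _ = Real.sin θ * (r * M) * (ρ Set.univ).toReal := by rw [smul_eq_mul]; ring
  have hθ1 : (1:ℝ) ≤ θ := by nlinarith [Real.pi_gt_three]
  calc (∫ s, Pf r θ s ∂ρ) / θ ≤ (Real.sin θ * (r * M) * (ρ Set.univ).toReal) / θ := by
        exact div_le_div_of_nonneg_right hint hθ.1.le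
      _ ≤ Real.sin θ * (r * M) * (ρ Set.univ).toReal :=
        div_le_self (by positivity) hθ1
      _ = Real.sin θ * (r * M * (ρ Set.univ).toReal) := by ring
      _ < c := h3

lemma abs_cos_lt_one (A : ℝ) (hA : A ∈ Set.Ioo 0 π) : |Real.cos A| < 1 := by
  rw [← sq_lt_one_iff_abs_lt_one]
  have hs := Real.sin_pos_of_pos_of_lt_pi hA.1 hA.2
  nlinarith [Real.sin_sq_add_cos_sq A]

lemma contH (ρ : Measure ℝ) [IsFiniteMeasure ρ] (r A : ℝ) (hr : 0 < r)
    (hA : A ∈ Set.Ioo 0 π) :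
    ContinuousAt (fun θ => (∫ s, Pf r θ s ∂ρ) / θ) A := by
  have hM : (0:ℝ) < 1 + r⁻¹^2 := by positivity
  set M : ℝ := 1 + r⁻¹^2 with hMdef
  set ε : ℝ := (1 - |Real.cos A|) / 2 with hεdef
  have hε : 0 < ε := by
    have := abs_cos_lt_one A hA
    rw [hεdef]; linarith
  have hcont1 : ContinuousAt (fun θ => ∫ s, Pf r θ s ∂ρ) A := by
    apply continuousAt_of_dominated (bound := fun _ : ℝ => r * M / ε)
    · -- a.e. strongly measurable
      have hev : ∀ᶠ θ in nhds A, θ ∈ Set.Ioo 0 π :=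
        (isOpen_Ioo.eventually_mem hA)
      filter_upwards [hev] with θ hθ
      have hsin := Real.sin_pos_of_pos_of_lt_pi hθ.1 hθ.2
      exact (continuous_Pf r θ (ne_of_gt (mul_pos hr hsin))).aestronglyMeasurable
    · -- uniform bound
      have hev : ∀ᶠ θ in nhds A, θ ∈ Set.Ioo 0 π :=
        (isOpen_Ioo.eventually_mem hA)
      have hev2 : ∀ᶠ θ in nhds A, ε < 1 - |Real.cos θ| := by
        have hco : ContinuousAt (fun θ : ℝ => 1 - |Real.cos θ|) A := by
          apply ContinuousAt.sub continuousAt_const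
          exact (continuous_abs.comp Real.continuous_cos).continuousAt
        apply hco.eventually_const_lt
        rw [hεdef]
        have := abs_cos_lt_one A hA
        linarith
      filter_upwards [hev, hev2] with θ hθ hθ2
      filter_upwards with s
      have hsin := Real.sin_pos_of_pos_of_lt_pi hθ.1 hθ.2
      have hD : 0 < (r * Real.cos θ - s)^2 + (r * Real.sin θ)^2 :=
        Pf_denom_pos r θ s (ne_of_gt (mul_pos hr hsin))
      rw [Real.norm_eq_abs, abs_of_nonneg (Pf_nonneg r θ s hr hθ)]
      rw [Pf, div_le_div_iff₀ hD hε]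
      have e1 : 1 + s^2 ≤ M * (r^2 + s^2) := one_add_sq_le r s hr
      have e2 : ε * (r^2 + s^2) ≤ (r * Real.cos θ - s)^2 + (r * Real.sin θ)^2 := by
        calc ε * (r^2 + s^2) ≤ (1 - |Real.cos θ|) * (r^2 + s^2) :=
              mul_le_mul_of_nonneg_right (le_of_lt hθ2) (by positivity)
          _ ≤ _ := denom_ge_mul r θ s
      have e3 : Real.sin θ ≤ 1 := Real.sin_le_one θ
      calc (1 + s^2) * (r * Real.sin θ) * ε ≤ (M * (r^2 + s^2)) * (r * 1) * ε := by
            apply mul_le_mul_of_nonneg_right _ hε.le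
            apply mul_le_mul e1 (by nlinarith) (by positivity) (by positivity)
        _ = (r * M) * (ε * (r^2 + s^2)) := by ring
        _ ≤ (r * M) * ((r * Real.cos θ - s)^2 + (r * Real.sin θ)^2) :=
            mul_le_mul_of_nonneg_left e2 (by positivity)
    · exact integrable_const _
    · -- continuity in θ for each s
      filter_upwards with s
      have hsinA := Real.sin_pos_of_pos_of_lt_pi hA.1 hA.2
      have hDA : ((r * Real.cos A - s)^2 + (r * Real.sin A)^2) ≠ 0 :=
        ne_of_gt (Pf_denom_pos r A s (ne_of_gt (mul_pos hr hsinA)))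
      unfold Pf
      apply ContinuousAt.div
      · exact (continuous_const.mul (continuous_const.mul Real.continuous_sin)).continuousAt
      · exact ((((continuous_const.mul Real.continuous_cos).sub continuous_const).pow 2).add
          ((continuous_const.mul Real.continuous_sin).pow 2)).continuousAt
      · exact hDA
  exact hcont1.div continuousAt_id (ne_of_gt hA.1)

end Aux

open Real in
theorem stmt9 (ρ : Measure ℝ) [IsFiniteMeasure ρ] (hρ : ρ (Set.Iio 0) = 0)
    (a t : ℝ) (ht : 1 < t) :
    (∀ r : ℝ, 0 < r →
      ({θ : ℝ | θ ∈ Set.Ioo 0 Real.pi ∧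
          -(ufun ρ a ((r : ℂ) * Complex.exp ((θ : ℂ) * Complex.I))).im / θ
            < 1 / (t - 1)}).Nonempty ∧
        0 ≤ At ρ a t r ∧ At ρ a t r < Real.pi) ∧
    ({r : ℝ | 0 < r ∧ ENNReal.ofReal (1 / (t - 1)) < gfun ρ r} =
      {r : ℝ | 0 < r ∧ 0 < At ρ a t r}) ∧
    (∀ r : ℝ, 0 < r → ENNReal.ofReal (1 / (t - 1)) < gfun ρ r →
      (ufun ρ a ((r : ℂ) * Complex.exp ((At ρ a t r : ℂ) * Complex.I))).im
        = -(At ρ a t r) / (t - 1)) := by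
  have ht' : 0 < t - 1 := by linarith
  set c : ℝ := 1 / (t - 1) with hcdef
  have hc : 0 < c := by positivity
  have hset : ∀ r : ℝ, 0 < r →
      {θ : ℝ | θ ∈ Set.Ioo 0 Real.pi ∧
        -(ufun ρ a ((r : ℂ) * Complex.exp ((θ : ℂ) * Complex.I))).im / θ < c}
      = {θ : ℝ | θ ∈ Set.Ioo 0 Real.pi ∧ (∫ s, Pf r θ s ∂ρ) / θ < c} := by
    intro r hr
    ext θ
    simp only [Set.mem_setOf_eq]
    refine and_congr_right fun hθ => ?_
    rw [show ((r:ℂ) * Complex.exp ((θ:ℂ) * Complex.I)) = zpt r θ from rfl,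
      neg_im_u ρ a r θ hr hθ]
  have hAt : ∀ r : ℝ, 0 < r →
      At ρ a t r = sInf {θ : ℝ | θ ∈ Set.Ioo 0 Real.pi ∧ (∫ s, Pf r θ s ∂ρ) / θ < c} := by
    intro r hr; rw [At, ← hcdef, hset r hr]
  have hgfun : ∀ r : ℝ, gfun ρ r = ∫⁻ s, Gf r s ∂ρ := fun r => rfl
  have hbdd : ∀ r : ℝ, BddBelow {θ : ℝ | θ ∈ Set.Ioo 0 Real.pi ∧ (∫ s, Pf r θ s ∂ρ) / θ < c} :=
    fun r => ⟨0, fun θ hθ => hθ.1.1.le⟩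
  have hne : ∀ r : ℝ, 0 < r →
      {θ : ℝ | θ ∈ Set.Ioo 0 Real.pi ∧ (∫ s, Pf r θ s ∂ρ) / θ < c}.Nonempty := by
    intro r hr
    obtain ⟨θ, hθ, hlt⟩ := exists_theta ρ hρ r c hr hc
    exact ⟨θ, hθ, hlt⟩
  have hA0 : ∀ r : ℝ, 0 < r → 0 ≤ At ρ a t r := by
    intro r hr
    rw [hAt r hr]
    exact le_csInf (hne r hr) (fun θ hθ => hθ.1.1.le)
  have hAπ : ∀ r : ℝ, 0 < r → At ρ a t r < Real.pi := by
    intro r hr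
    obtain ⟨θ, hθ, hlt⟩ := hne r hr
    rw [hAt r hr]
    exact lt_of_le_of_lt (csInf_le (hbdd r) ⟨hθ, hlt⟩) hθ.2
  have keyfwd : ∀ r : ℝ, 0 < r → ENNReal.ofReal c < gfun ρ r → 0 < At ρ a t r := by
    intro r hr hg
    rcases lt_or_eq_of_le (hA0 r hr) with h | h
    · exact h
    exfalso
    obtain ⟨u, -, hu, humem⟩ := exists_seq_tendsto_sInf (hne r hr) (hbdd r)
    rw [← hAt r hr, ← h] at hu
    have hmem : ∀ n, u n ∈ Set.Ioo 0 Real.pi := fun n => (humem n).1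
    have hfat := fatou_bound ρ hρ r hr u hmem hu
    have hle : liminf (fun n => ∫⁻ s, ENNReal.ofReal (Pf r (u n) s / u n) ∂ρ) atTop
        ≤ ENNReal.ofReal c := by
      have hbnd : ∀ n, (∫⁻ s, ENNReal.ofReal (Pf r (u n) s / u n) ∂ρ) ≤ ENNReal.ofReal c := by
        intro n
        rw [← ofReal_H ρ r (u n) hr (hmem n)]
        exact ENNReal.ofReal_le_ofReal (humem n).2.le
      calc liminf (fun n => ∫⁻ s, ENNReal.ofReal (Pf r (u n) s / u n) ∂ρ) atTop
          ≤ liminf (fun _ : ℕ => ENNReal.ofReal c) atTop :=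
            Filter.liminf_le_liminf (Filter.Eventually.of_forall hbnd)
        _ = ENNReal.ofReal c := Filter.liminf_const _
    rw [hgfun] at hg
    exact absurd (le_trans hfat hle) (not_le.mpr hg)
  have keybwd : ∀ r : ℝ, 0 < r → ¬(ENNReal.ofReal c < gfun ρ r) → At ρ a t r = 0 := by
    intro r hr hg
    rw [not_lt, hgfun] at hg
    have hall : ∀ θ ∈ Set.Ioo 0 Real.pi, (∫ s, Pf r θ s ∂ρ) / θ < c :=
      fun θ hθ => H_lt ρ hρ r c hr hc hg θ hθ
    rw [hAt r hr]
    have hS : {θ : ℝ | θ ∈ Set.Ioo 0 Real.pi ∧ (∫ s, Pf r θ s ∂ρ) / θ < c}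
        = Set.Ioo 0 Real.pi := by
      ext θ
      exact ⟨fun h => h.1, fun h => ⟨h, hall θ h⟩⟩
    rw [hS]
    exact csInf_Ioo Real.pi_pos
  refine ⟨?_, ?_, ?_⟩
  · intro r hr
    refine ⟨?_, hA0 r hr, hAπ r hr⟩
    rw [hset r hr]
    exact hne r hr
  · ext r
    simp only [Set.mem_setOf_eq]
    constructor
    · rintro ⟨hr, hg⟩; exact ⟨hr, keyfwd r hr hg⟩
    · rintro ⟨hr, hA⟩
      refine ⟨hr, ?_⟩
      by_contra hg
      exact absurd (keybwd r hr hg) (ne_of_gt hA)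
  · intro r hr hg
    have hApos := keyfwd r hr hg
    have hAIoo : At ρ a t r ∈ Set.Ioo 0 Real.pi := ⟨hApos, hAπ r hr⟩
    set A := At ρ a t r with hAdef
    set S := {θ : ℝ | θ ∈ Set.Ioo 0 Real.pi ∧ (∫ s, Pf r θ s ∂ρ) / θ < c} with hSdef
    have hAS : A = sInf S := hAt r hr
    have hcont : ContinuousAt (fun θ => (∫ s, Pf r θ s ∂ρ) / θ) A := contH ρ r A hr hAIoo
    have hle : (∫ s, Pf r A s ∂ρ) / A ≤ c := by
      have hclos : A ∈ closure S := hAS ▸ csInf_mem_closure (hne r hr) (hbdd r)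
      haveI : (nhdsWithin A S).NeBot := mem_closure_iff_nhdsWithin_neBot.mp hclos
      apply le_of_tendsto
        (hcont.continuousWithinAt : ContinuousWithinAt (fun θ => (∫ s, Pf r θ s ∂ρ) / θ) S A)
      filter_upwards [self_mem_nhdsWithin] with θ hθ
      exact hθ.2.le
    have hge : c ≤ (∫ s, Pf r A s ∂ρ) / A := by
      have hclos : A ∈ closure (Set.Ioo 0 A) := by
        rw [closure_Ioo (ne_of_lt hApos)]
        exact ⟨hApos.le, le_refl A⟩
      haveI : (nhdsWithin A (Set.Ioo 0 A)).NeBot := mem_closure_iff_nhdsWithin_neBot.mp hclos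
      apply ge_of_tendsto (hcont.continuousWithinAt :
        ContinuousWithinAt (fun θ => (∫ s, Pf r θ s ∂ρ) / θ) (Set.Ioo 0 A) A)
      filter_upwards [self_mem_nhdsWithin] with θ hθ
      by_contra hlt
      rw [not_le] at hlt
      have hθS : θ ∈ S := ⟨⟨hθ.1, lt_trans hθ.2 hAIoo.2⟩, hlt⟩
      have hcs := csInf_le (hbdd r) hθS
      rw [← hAS] at hcs
      linarith [hθ.2]
    have hHA : (∫ s, Pf r A s ∂ρ) / A = c := le_antisymm hle hge
    rw [div_eq_iff (ne_of_gt hApos)] at hHA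
    rw [show ((r:ℂ) * Complex.exp ((A:ℂ) * Complex.I)) = zpt r A from rfl]
    have h1 := neg_im_u ρ a r A hr hAIoo
    have h3 : (ufun ρ a (zpt r A)).im = -(c * A) := by linarith
    rw [h3, hcdef]
    ring
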